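/- Let T be a locally finite tree with maximal degree at most D and minimal degree at least d ≥ 2. Let P be the random-walk operator (Pf)(x) = (1/d(x)) Σ_{y∼x} f(y), self-adjoint on ℓ²(T, d) (where vertex x has weight d(x)). Then the spectral radius of P satisfies ρ_P ≤ 2√(D−1)/d. -/

import Mathlib

open Finset

variable {V : Type*}

open SimpleGraph


/-- In a tree, a vertex has at most one neighbor that is not farther from a root `r`. -/
lemma tree_parent_unique [DecidableEq V] {G : SimpleGraph V} (htree : G.IsTree) (r x : V)
    {y₁ y₂ : V} (h₁ : G.Adj y₁ x) (h₂ : G.Adj y₂ x)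
    (hd₁ : G.dist r y₁ ≤ G.dist r x) (hd₂ : G.dist r y₂ ≤ G.dist r x) : y₁ = y₂ := by
  have hconn := htree.isConnected
  -- geodesic paths from r to yᵢ
  have geo : ∀ (y : V), G.Adj y x → G.dist r y ≤ G.dist r x →
      ∃ p : G.Walk r y, p.IsPath ∧ p.length = G.dist r y ∧ x ∉ p.support := by
    intro y hy hdy
    obtain ⟨p₀, hp₀⟩ := hconn.exists_walk_length_eq_dist r y
    refine ⟨p₀.bypass, p₀.bypass_isPath, le_antisymm ?_ (SimpleGraph.dist_le _), ?_⟩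
    · exact le_trans (SimpleGraph.Walk.length_bypass_le p₀) hp₀.le
    · intro hx
      have hx' : x ∈ p₀.support := p₀.support_bypass_subset hx
      have hsplit := congrArg SimpleGraph.Walk.length (p₀.take_spec hx')
      rw [SimpleGraph.Walk.length_append] at hsplit
      have h1 : G.dist r x ≤ (p₀.takeUntil x hx').length := SimpleGraph.dist_le _
      have h2 : G.dist x y ≤ (p₀.dropUntil x hx').length := SimpleGraph.dist_le _
      have hxy : G.dist x y ≠ 0 := by
        rw [SimpleGraph.dist_ne_zero_iff_ne_and_reachable]
        exact ⟨hy.ne', hconn.preconnected x y⟩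
      omega
      -- dist r x + dist x y ≤ p₀.length = dist r y ≤ dist r x, dist x y ≥ 1: contradiction
  obtain ⟨p₁, hp₁, hl₁, hx₁⟩ := geo y₁ h₁ hd₁
  obtain ⟨p₂, hp₂, hl₂, hx₂⟩ := geo y₂ h₂ hd₂
  have hq₁ : (p₁.concat h₁).IsPath := by
    rw [← SimpleGraph.Walk.isPath_reverse_iff, SimpleGraph.Walk.reverse_concat]
    exact hp₁.reverse.cons (by simpa [SimpleGraph.Walk.support_reverse] using hx₁)
  have hq₂ : (p₂.concat h₂).IsPath := by
    rw [← SimpleGraph.Walk.isPath_reverse_iff, SimpleGraph.Walk.reverse_concat]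
    exact hp₂.reverse.cons (by simpa [SimpleGraph.Walk.support_reverse] using hx₂)
  obtain ⟨q, hq, huniq⟩ := htree.existsUnique_path r x
  have he : p₁.concat h₁ = p₂.concat h₂ := by
    rw [huniq _ hq₁, huniq _ hq₂]
  exact (SimpleGraph.Walk.concat_inj he).1

lemma pow_dist_le_aux {β : ℝ} (hβ : 1 ≤ β) : ∀ a b : ℕ, a ≤ b + 1 → β⁻¹ ^ b ≤ β * β⁻¹ ^ a := by
  have hβ0 : (0:ℝ) < β := lt_of_lt_of_le one_pos hβ
  have hβi0 : (0:ℝ) ≤ β⁻¹ := le_of_lt (inv_pos.mpr hβ0)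
  have hβi1 : β⁻¹ ≤ 1 := inv_le_one_of_one_le₀ hβ
  intro a b hab
  match a with
  | 0 =>
    calc β⁻¹ ^ b ≤ 1 := pow_le_one₀ hβi0 hβi1
    _ ≤ β * β⁻¹ ^ 0 := by simpa using hβ
  | n + 1 =>
    have hbn : n ≤ b := by omega
    calc β⁻¹ ^ b ≤ β⁻¹ ^ n := pow_le_pow_of_le_one hβi0 hβi1 hbn
    _ = β * β⁻¹ ^ (n + 1) := by
        rw [pow_succ']
        rw [← mul_assoc, mul_inv_cancel₀ (ne_of_gt hβ0), one_mul]

lemma schur_bound [DecidableEq V] {G : SimpleGraph V} [∀ v : V, Fintype (G.neighborSet v)]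
    (htree : G.IsTree) (r : V) {β : ℝ} (hβ : 1 ≤ β) (x : V) :
    ∑ y ∈ G.neighborFinset x, β⁻¹ ^ G.dist r y ≤
      β * β⁻¹ ^ G.dist r x + ((G.degree x : ℝ) - 1) * (β⁻¹ ^ G.dist r x / β) := by
  have hβ0 : (0:ℝ) < β := lt_of_lt_of_le one_pos hβ
  have hβi0 : (0:ℝ) ≤ β⁻¹ := le_of_lt (inv_pos.mpr hβ0)
  have hβi1 : β⁻¹ ≤ 1 := inv_le_one_of_one_le₀ hβ
  set wx : ℝ := β⁻¹ ^ G.dist r x with hwx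
  have hwx0 : 0 < wx := pow_pos (inv_pos.mpr hβ0) _
  set s := (G.neighborFinset x).filter (fun y => G.dist r y ≤ G.dist r x) with hsdef
  set t := (G.neighborFinset x).filter (fun y => ¬ G.dist r y ≤ G.dist r x) with htdef
  -- all neighbors: w y ≤ β * wx
  have hb1 : ∀ y ∈ G.neighborFinset x, β⁻¹ ^ G.dist r y ≤ β * wx := by
    intro y hy
    rw [mem_neighborFinset] at hy
    have htri : G.dist r x ≤ G.dist r y + 1 := by
      have h1 : G.dist y x = 1 := SimpleGraph.dist_eq_one_iff_adj.mpr hy.symm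
      calc G.dist r x ≤ G.dist r y + G.dist y x := htree.isConnected.dist_triangle
      _ = G.dist r y + 1 := by rw [h1]
    exact pow_dist_le_aux hβ _ _ htri
  -- far neighbors: w y ≤ wx / β
  have hb2 : ∀ y ∈ t, β⁻¹ ^ G.dist r y ≤ wx / β := by
    intro y hy
    rw [htdef, mem_filter] at hy
    have : G.dist r x + 1 ≤ G.dist r y := by omega
    calc β⁻¹ ^ G.dist r y ≤ β⁻¹ ^ (G.dist r x + 1) := pow_le_pow_of_le_one hβi0 hβi1 this
    _ = wx / β := by rw [pow_succ, hwx, div_eq_mul_inv]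
  have hscard : s.card ≤ 1 := by
    rw [Finset.card_le_one]
    intro a ha b hb
    rw [hsdef, mem_filter, mem_neighborFinset] at ha hb
    exact tree_parent_unique htree r x ha.1.symm hb.1.symm ha.2 hb.2
  have hsplit : ∑ y ∈ s, β⁻¹ ^ G.dist r y + ∑ y ∈ t, β⁻¹ ^ G.dist r y
      = ∑ y ∈ G.neighborFinset x, β⁻¹ ^ G.dist r y :=
    Finset.sum_filter_add_sum_filter_not (G.neighborFinset x) _ _
  have hcard : s.card + t.card = G.degree x := by
    rw [hsdef, htdef, Finset.card_filter_add_card_filter_not,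
      card_neighborFinset_eq_degree]
  have hsum2 : ∑ y ∈ t, β⁻¹ ^ G.dist r y ≤ (t.card : ℝ) * (wx / β) := by
    calc _ ≤ ∑ _y ∈ t, (wx / β) := Finset.sum_le_sum hb2
    _ = _ := by rw [Finset.sum_const, nsmul_eq_mul]
  have hwxβ : wx / β ≤ β * wx := by
    calc wx / β ≤ wx / 1 := by
          apply div_le_div_of_nonneg_left (le_of_lt hwx0) one_pos hβ
    _ = wx := div_one wx
    _ ≤ β * wx := le_mul_of_one_le_left (le_of_lt hwx0) hβ
  rcases Finset.eq_empty_or_nonempty s with hse | hsne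
  · -- no parent
    have h0 : ∑ y ∈ s, β⁻¹ ^ G.dist r y = 0 := by rw [hse]; simp
    have htc : t.card = G.degree x := by
      rw [hse] at hcard; simpa using hcard
    rw [← hsplit, h0, zero_add]
    have hdeg0 : 0 ≤ (G.degree x : ℝ) := Nat.cast_nonneg _
    calc _ ≤ (t.card : ℝ) * (wx / β) := hsum2
    _ = (G.degree x : ℝ) * (wx / β) := by rw [htc]
    _ ≤ β * wx + ((G.degree x : ℝ) - 1) * (wx / β) := by
        have hβwx : 0 < wx / β := div_pos hwx0 hβ0
        nlinarith [hwxβ, hβwx]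
  · have hs1 : s.card = 1 := le_antisymm hscard (Finset.card_pos.mpr hsne)
    have hsum1 : ∑ y ∈ s, β⁻¹ ^ G.dist r y ≤ β * wx := by
      calc _ ≤ ∑ _y ∈ s, β * wx :=
            Finset.sum_le_sum (fun y hy => hb1 y (Finset.mem_of_mem_filter y hy))
      _ = (s.card : ℝ) * (β * wx) := by rw [Finset.sum_const, nsmul_eq_mul]
      _ = β * wx := by rw [hs1]; simp
    have htc : t.card = G.degree x - 1 := by omega
    have hd1 : 1 ≤ G.degree x := by omega
    have hdeg : (t.card : ℝ) = (G.degree x : ℝ) - 1 := by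
      rw [htc]; push_cast [Nat.cast_sub hd1]; ring
    rw [← hsplit]
    rw [hdeg] at hsum2
    linarith [hsum1, hsum2]

lemma schur_arith {β dR kR DR wx : ℝ} (hβ : 1 ≤ β) (hβ2 : β^2 = DR - 1) (h2 : 2 ≤ dR)
    (hdk : dR ≤ kR) (hkD : kR ≤ DR) (hwx : 0 < wx) :
    β * wx + (kR - 1) * (wx / β) ≤ (2 * β / dR) * kR * wx := by
  have hβ0 : (0:ℝ) < β := lt_of_lt_of_le one_pos hβ
  have hd0 : (0:ℝ) < dR := by linarith
  have key : dR * (β^2 + kR - 1) ≤ 2 * β^2 * kR := by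
    nlinarith [mul_nonneg (sub_nonneg.mpr hdk) (by nlinarith : (0:ℝ) ≤ 2*β^2 - dR)]
  obtain ⟨c, hc, rfl⟩ : ∃ c, 0 < c ∧ wx = β * c :=
    ⟨wx / β, div_pos hwx hβ0, by field_simp⟩
  rw [mul_div_cancel_left₀ c (ne_of_gt hβ0)]
  rw [div_mul_eq_mul_div, div_mul_eq_mul_div, le_div_iff₀ hd0]
  nlinarith [mul_le_mul_of_nonneg_right key hc.le]

/-- Norm bound for the random walk operator P on ℓ²(T,deg) for a locally finite tree T of
maximal degree ≤ D and minimal degree ≥ d ≥ 2: ‖Pf‖ ≤ (2√(D−1)/d)‖f‖ on finitely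
supported functions. -/
theorem random_walk_spectral_radius [DecidableEq V] (G : SimpleGraph V)
    [∀ v : V, Fintype (G.neighborSet v)]
    (htree : G.IsTree) (D d : ℕ) (hd : 2 ≤ d)
    (hmin : ∀ v : V, d ≤ G.degree v) (hmax : ∀ v : V, G.degree v ≤ D)
    (f : V → ℂ) (hf : (Function.support f).Finite) :
    ∑' x : V, (G.degree x : ℝ) *
        ‖((G.degree x : ℂ))⁻¹ * ∑ y ∈ G.neighborFinset x, f y‖ ^ 2
      ≤ (2 * Real.sqrt ((D : ℝ) - 1) / (d : ℝ)) ^ 2 *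
        ∑' x : V, (G.degree x : ℝ) * ‖f x‖ ^ 2 := by
  classical
  rcases isEmpty_or_nonempty V with hV | hV
  · rw [tsum_empty, tsum_empty]; simp
  obtain ⟨r⟩ := hV
  set β := Real.sqrt ((D:ℝ) - 1) with hβdef
  have hdD : d ≤ D := le_trans (hmin r) (hmax r)
  have hD2 : 2 ≤ D := le_trans hd hdD
  have hD1 : (1:ℝ) ≤ (D:ℝ) - 1 := by
    have : (2:ℝ) ≤ (D:ℝ) := by exact_mod_cast hD2
    linarith
  have hβ1 : 1 ≤ β := by
    have h := Real.sqrt_le_sqrt hD1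
    rwa [Real.sqrt_one, ← hβdef] at h
  have hβ0 : 0 < β := lt_of_lt_of_le one_pos hβ1
  have hβsq : β ^ 2 = (D:ℝ) - 1 := Real.sq_sqrt (by linarith)
  set C := 2 * β / (d:ℝ) with hC
  have hd0 : (0:ℝ) < (d:ℝ) := by
    have : (2:ℝ) ≤ (d:ℝ) := by exact_mod_cast hd
    linarith
  have hC0 : 0 < C := by rw [hC]; positivity
  set w : V → ℝ := fun x => β⁻¹ ^ G.dist r x with hw
  have hw0 : ∀ x, 0 < w x := fun x => pow_pos (inv_pos.mpr hβ0) _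
  have hdegpos : ∀ x : V, 0 < (G.degree x : ℝ) := by
    intro x
    have : 2 ≤ G.degree x := le_trans hd (hmin x)
    exact_mod_cast lt_of_lt_of_le two_pos this
  -- Schur estimate
  have hschur : ∀ x : V, ∑ y ∈ G.neighborFinset x, w y ≤ C * ((G.degree x : ℝ) * w x) := by
    intro x
    refine le_trans (schur_bound htree r hβ1 x) ?_
    have h1 : (d:ℝ) ≤ (G.degree x : ℝ) := by exact_mod_cast hmin x
    have h2 : (G.degree x : ℝ) ≤ (D:ℝ) := by exact_mod_cast hmax x
    have h3 : (2:ℝ) ≤ (d:ℝ) := by exact_mod_cast hd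
    have := schur_arith hβ1 hβsq h3 h1 h2 (hw0 x)
    rw [hC]
    calc β * β⁻¹ ^ G.dist r x + ((G.degree x:ℝ) - 1) * (β⁻¹ ^ G.dist r x / β)
        ≤ (2 * β / (d:ℝ)) * (G.degree x : ℝ) * (β⁻¹ ^ G.dist r x) := this
      _ = 2 * β / (d:ℝ) * ((G.degree x:ℝ) * w x) := by rw [hw]; ring
  set A := hf.toFinset with hA
  set F := A ∪ A.biUnion (fun a => G.neighborFinset a) with hF
  have hAF : A ⊆ F := Finset.subset_union_left
  have hfA : ∀ x : V, x ∉ A → f x = 0 := by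
    intro x hx
    by_contra h
    exact hx ((Set.Finite.mem_toFinset hf).mpr h)
  have hgF : ∀ x : V, x ∉ F → ∑ y ∈ G.neighborFinset x, f y = 0 := by
    intro x hx
    apply Finset.sum_eq_zero
    intro y hy
    by_contra hfy
    apply hx
    rw [hF]
    refine Finset.mem_union_right _ (Finset.mem_biUnion.mpr ⟨y, ?_, ?_⟩)
    · exact (Set.Finite.mem_toFinset hf).mpr hfy
    · rw [mem_neighborFinset] at hy ⊢
      exact hy.symm
  have hL : (∑' x : V, (G.degree x : ℝ) *
      ‖((G.degree x : ℂ))⁻¹ * ∑ y ∈ G.neighborFinset x, f y‖ ^ 2)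
      = ∑ x ∈ F, (G.degree x : ℝ) *
        ‖((G.degree x : ℂ))⁻¹ * ∑ y ∈ G.neighborFinset x, f y‖ ^ 2 := by
    apply tsum_eq_sum
    intro x hx
    rw [hgF x hx]
    simp
  have hR : (∑' x : V, (G.degree x : ℝ) * ‖f x‖ ^ 2)
      = ∑ x ∈ F, (G.degree x : ℝ) * ‖f x‖ ^ 2 := by
    apply tsum_eq_sum
    intro x hx
    rw [hfA x (fun hxA => hx (hAF hxA))]
    simp
  rw [hL, hR]
  -- pointwise rewriting
  have hterm : ∀ x : V, (G.degree x : ℝ) *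
      ‖((G.degree x : ℂ))⁻¹ * ∑ y ∈ G.neighborFinset x, f y‖ ^ 2
      = ‖∑ y ∈ G.neighborFinset x, f y‖ ^ 2 / (G.degree x : ℝ) := by
    intro x
    rw [norm_mul, norm_inv, Complex.norm_natCast]
    have h0 : (G.degree x : ℝ) ≠ 0 := ne_of_gt (hdegpos x)
    field_simp
  -- Cauchy-Schwarz step
  have hCS : ∀ x : V, ‖∑ y ∈ G.neighborFinset x, f y‖ ^ 2 / (G.degree x : ℝ)
      ≤ C * ∑ y ∈ G.neighborFinset x, (w x / w y) * ‖f y‖ ^ 2 := by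
    intro x
    have h1 : ‖∑ y ∈ G.neighborFinset x, f y‖
        ≤ ∑ y ∈ G.neighborFinset x, ‖f y‖ := norm_sum_le _ _
    have habs0 : (0:ℝ) ≤ ‖∑ y ∈ G.neighborFinset x, f y‖ := norm_nonneg _
    have hS0 : (0:ℝ) ≤ ∑ y ∈ G.neighborFinset x, (w x / w y) * ‖f y‖ ^ 2 := by
      apply Finset.sum_nonneg
      intro y _
      have := hw0 x
      have := hw0 y
      positivity
    have h2 : (∑ y ∈ G.neighborFinset x, ‖f y‖) ^ 2
        ≤ (∑ y ∈ G.neighborFinset x, w y / w x) *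
          (∑ y ∈ G.neighborFinset x, (w x / w y) * ‖f y‖ ^ 2) := by
      have e1 : ∑ y ∈ G.neighborFinset x, ‖f y‖
          = ∑ y ∈ G.neighborFinset x,
            Real.sqrt (w y / w x) * (Real.sqrt (w x / w y) * ‖f y‖) := by
        apply Finset.sum_congr rfl
        intro y _
        rw [← mul_assoc, ← Real.sqrt_mul (le_of_lt (div_pos (hw0 y) (hw0 x)))]
        have hne : (w y / w x) * (w x / w y) = 1 := by
          rw [div_mul_div_comm, mul_comm (w y) (w x)]
          exact div_self (mul_pos (hw0 x) (hw0 y)).ne'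
        rw [hne, Real.sqrt_one, one_mul]
      have e2 : ∑ y ∈ G.neighborFinset x, (Real.sqrt (w y / w x)) ^ 2
          = ∑ y ∈ G.neighborFinset x, w y / w x := by
        apply Finset.sum_congr rfl
        intro y _
        exact Real.sq_sqrt (le_of_lt (div_pos (hw0 y) (hw0 x)))
      have e3 : ∑ y ∈ G.neighborFinset x, (Real.sqrt (w x / w y) * ‖f y‖) ^ 2
          = ∑ y ∈ G.neighborFinset x, (w x / w y) * ‖f y‖ ^ 2 := by
        apply Finset.sum_congr rfl
        intro y _
        rw [mul_pow, Real.sq_sqrt (le_of_lt (div_pos (hw0 x) (hw0 y)))]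
      rw [e1, ← e2, ← e3]
      exact Finset.sum_mul_sq_le_sq_mul_sq _ _ _
    have h3 : ∑ y ∈ G.neighborFinset x, w y / w x ≤ C * (G.degree x : ℝ) := by
      rw [← Finset.sum_div, div_le_iff₀ (hw0 x)]
      calc ∑ y ∈ G.neighborFinset x, w y ≤ C * ((G.degree x : ℝ) * w x) := hschur x
        _ = C * (G.degree x : ℝ) * w x := by ring
    have h4 : ‖∑ y ∈ G.neighborFinset x, f y‖ ^ 2
        ≤ C * (G.degree x : ℝ) *
          (∑ y ∈ G.neighborFinset x, (w x / w y) * ‖f y‖ ^ 2) := by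
      calc ‖∑ y ∈ G.neighborFinset x, f y‖ ^ 2
          ≤ (∑ y ∈ G.neighborFinset x, ‖f y‖) ^ 2 := by
            apply pow_le_pow_left₀ habs0 h1
        _ ≤ (∑ y ∈ G.neighborFinset x, w y / w x) *
            (∑ y ∈ G.neighborFinset x, (w x / w y) * ‖f y‖ ^ 2) := h2
        _ ≤ C * (G.degree x : ℝ) *
            (∑ y ∈ G.neighborFinset x, (w x / w y) * ‖f y‖ ^ 2) := by
            exact mul_le_mul_of_nonneg_right h3 hS0
    rw [div_le_iff₀ (hdegpos x)]
    calc ‖∑ y ∈ G.neighborFinset x, f y‖ ^ 2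
        ≤ C * (G.degree x : ℝ) *
          (∑ y ∈ G.neighborFinset x, (w x / w y) * ‖f y‖ ^ 2) := h4
      _ = C * (∑ y ∈ G.neighborFinset x, (w x / w y) * ‖f y‖ ^ 2)
          * (G.degree x : ℝ) := by ring
  -- rearrange double sum
  have hswap : ∀ x : V, ∑ y ∈ G.neighborFinset x, (w x / w y) * ‖f y‖ ^ 2
      = ∑ y ∈ A, (if y ∈ G.neighborFinset x then (w x / w y) * ‖f y‖ ^ 2 else 0) := by
    intro x
    rw [Finset.sum_ite_mem]
    rw [Finset.inter_comm]
    symm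
    apply Finset.sum_subset (Finset.inter_subset_left)
    intro y hy hyn
    have : y ∉ A := by
      intro hyA
      exact hyn (Finset.mem_inter.mpr ⟨hy, hyA⟩)
    rw [hfA y this]
    simp
  have hinner : ∀ y ∈ A, ∑ x ∈ F,
      (if y ∈ G.neighborFinset x then (w x / w y) * ‖f y‖ ^ 2 else 0)
      ≤ C * ((G.degree y : ℝ) * ‖f y‖ ^ 2) := by
    intro y _
    have hcond : ∀ x : V, (y ∈ G.neighborFinset x) = (x ∈ G.neighborFinset y) := by
      intro x
      simp only [mem_neighborFinset]
      exact propext ⟨Adj.symm, Adj.symm⟩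
    calc ∑ x ∈ F, (if y ∈ G.neighborFinset x then (w x / w y) * ‖f y‖ ^ 2 else 0)
        = ∑ x ∈ F, (if x ∈ G.neighborFinset y then (w x / w y) * ‖f y‖ ^ 2 else 0) := by
          apply Finset.sum_congr rfl
          intro x _
          exact if_congr (iff_of_eq (hcond x)) rfl rfl
      _ = ∑ x ∈ F ∩ G.neighborFinset y, (w x / w y) * ‖f y‖ ^ 2 :=
          Finset.sum_ite_mem _ _ _
      _ ≤ ∑ x ∈ G.neighborFinset y, (w x / w y) * ‖f y‖ ^ 2 := by
          apply Finset.sum_le_sum_of_subset_of_nonneg (Finset.inter_subset_right)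
          intro x _ _
          have := hw0 x
          have := hw0 y
          positivity
      _ = (∑ x ∈ G.neighborFinset y, w x) * (‖f y‖ ^ 2 / w y) := by
          rw [Finset.sum_mul]
          apply Finset.sum_congr rfl
          intro x _
          field_simp
      _ ≤ (C * ((G.degree y : ℝ) * w y)) * (‖f y‖ ^ 2 / w y) := by
          apply mul_le_mul_of_nonneg_right (hschur y)
          positivity
      _ = C * ((G.degree y : ℝ) * ‖f y‖ ^ 2) := by
          field_simp
          rw [mul_right_comm _ (w y), mul_div_cancel_right₀ _ (hw0 y).ne']
  -- put it together
  calc ∑ x ∈ F, (G.degree x : ℝ) *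
        ‖((G.degree x : ℂ))⁻¹ * ∑ y ∈ G.neighborFinset x, f y‖ ^ 2
      = ∑ x ∈ F, ‖∑ y ∈ G.neighborFinset x, f y‖ ^ 2 / (G.degree x : ℝ) := by
        exact Finset.sum_congr rfl (fun x _ => hterm x)
    _ ≤ ∑ x ∈ F, C * ∑ y ∈ G.neighborFinset x, (w x / w y) * ‖f y‖ ^ 2 :=
        Finset.sum_le_sum (fun x _ => hCS x)
    _ = C * ∑ x ∈ F, ∑ y ∈ A,
        (if y ∈ G.neighborFinset x then (w x / w y) * ‖f y‖ ^ 2 else 0) := by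
        rw [← Finset.mul_sum]
        congr 1
        exact Finset.sum_congr rfl (fun x _ => hswap x)
    _ = C * ∑ y ∈ A, ∑ x ∈ F,
        (if y ∈ G.neighborFinset x then (w x / w y) * ‖f y‖ ^ 2 else 0) := by
        rw [Finset.sum_comm]
    _ ≤ C * ∑ y ∈ A, C * ((G.degree y : ℝ) * ‖f y‖ ^ 2) := by
        apply mul_le_mul_of_nonneg_left (Finset.sum_le_sum hinner) (le_of_lt hC0)
    _ = C ^ 2 * ∑ y ∈ A, (G.degree y : ℝ) * ‖f y‖ ^ 2 := by
        rw [← Finset.mul_sum]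
        ring
    _ ≤ C ^ 2 * ∑ y ∈ F, (G.degree y : ℝ) * ‖f y‖ ^ 2 := by
        apply mul_le_mul_of_nonneg_left ?_ (le_of_lt (pow_pos hC0 2))
        apply Finset.sum_le_sum_of_subset_of_nonneg hAF
        intro y _ _
        positivity
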